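/- Suppose x, y, θ, λ, μ : ℝ × [0,ℓ] → ℝ are smooth and satisfy the nonholonomic planar Cosserat rod equations ρẍ + Kx⁗ = λ, ρÿ + Ky⁗ = μ, αθ̈ − βθ″ = R(λ y′ − μ x′) together with the rolling constraints ẋ + R θ̇ y′ = 0 and ẏ − R θ̇ x′ = 0 on ℝ × [0,ℓ]. Then the local energy conservation law ∂/∂t [ (ρ/2)(ẋ² + ẏ²) + (α/2)θ̇² + (K/2)((x″)² + (y″)²) + (β/2)(θ′)² ] = ∂/∂s [ −K x‴ ẋ − K y‴ ẏ + β θ′ θ̇ + K (x″ ẋ′ + y″ ẏ′) ] holds at every point of ℝ × [0,ℓ]. -/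

import Mathlib

open MeasureTheory

/-- Partial derivative with respect to the first (time) variable. -/
noncomputable def pt (f : ℝ → ℝ → ℝ) : ℝ → ℝ → ℝ := fun t s => deriv (fun τ => f τ s) t

/-- Partial derivative with respect to the second (arclength) variable. -/
noncomputable def ps (f : ℝ → ℝ → ℝ) : ℝ → ℝ → ℝ := fun t s => deriv (fun σ => f t σ) s

/-- Smoothness of a field of two real variables. -/
def Smooth2 (f : ℝ → ℝ → ℝ) : Prop := ContDiff ℝ (⊤ : ℕ∞) (fun p : ℝ × ℝ => f p.1 p.2)

/-- Energy density of the planar Cosserat rod. -/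
noncomputable def Edens (ρ α β K : ℝ) (x y θ : ℝ → ℝ → ℝ) : ℝ → ℝ → ℝ := fun t s =>
  ρ / 2 * ((pt x t s) ^ 2 + (pt y t s) ^ 2) + α / 2 * (pt θ t s) ^ 2
    + K / 2 * ((ps (ps x) t s) ^ 2 + (ps (ps y) t s) ^ 2) + β / 2 * (ps θ t s) ^ 2

noncomputable def Fu (f : ℝ → ℝ → ℝ) : ℝ × ℝ → ℝ := fun p => f p.1 p.2

set_option linter.unnecessarySimpa false

lemma cast_one_le : (1 : WithTop ℕ∞) ≤ ((⊤:ℕ∞) : WithTop ℕ∞) := by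
  have : ((1:ℕ∞) : WithTop ℕ∞) ≤ ((⊤:ℕ∞) : WithTop ℕ∞) := by
    exact_mod_cast (le_top : (1:ℕ∞) ≤ ⊤)
  simpa using this

lemma cast_two_le : (2 : WithTop ℕ∞) ≤ ((⊤:ℕ∞) : WithTop ℕ∞) := by
  have : ((2:ℕ∞) : WithTop ℕ∞) ≤ ((⊤:ℕ∞) : WithTop ℕ∞) := by
    exact_mod_cast (le_top : (2:ℕ∞) ≤ ⊤)
  simpa using this

lemma cast_top_add_one_le : ((⊤:ℕ∞) : WithTop ℕ∞) + 1 ≤ ((⊤:ℕ∞) : WithTop ℕ∞) := by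
  have : (((⊤+1 :ℕ∞)) : WithTop ℕ∞) ≤ ((⊤:ℕ∞) : WithTop ℕ∞) := by
    exact_mod_cast (le_top : (⊤+1:ℕ∞) ≤ ⊤)
  simpa using this

lemma hasDerivAt_t {f : ℝ → ℝ → ℝ} (hf : Smooth2 f) (t s : ℝ) :
    HasDerivAt (fun τ => f τ s) (fderiv ℝ (Fu f) (t, s) (1, 0)) t := by
  have hF := (hf.differentiable (by simp) (t, s)).hasFDerivAt
  have hg : HasDerivAt (fun τ : ℝ => ((τ : ℝ), s)) ((1 : ℝ), (0 : ℝ)) t :=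
    (hasDerivAt_id t).prodMk (hasDerivAt_const t s)
  exact hF.comp_hasDerivAt t hg

lemma hasDerivAt_s {f : ℝ → ℝ → ℝ} (hf : Smooth2 f) (t s : ℝ) :
    HasDerivAt (fun σ => f t σ) (fderiv ℝ (Fu f) (t, s) (0, 1)) s := by
  have hF := (hf.differentiable (by simp) (t, s)).hasFDerivAt
  have hg : HasDerivAt (fun σ : ℝ => (t, σ)) ((0 : ℝ), (1 : ℝ)) s :=
    (hasDerivAt_const s t).prodMk (hasDerivAt_id s)
  exact hF.comp_hasDerivAt s hg

lemma pt_eq {f : ℝ → ℝ → ℝ} (hf : Smooth2 f) :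
    pt f = fun t s => fderiv ℝ (Fu f) (t, s) (1, 0) := by
  funext t s; exact (hasDerivAt_t hf t s).deriv

lemma ps_eq {f : ℝ → ℝ → ℝ} (hf : Smooth2 f) :
    ps f = fun t s => fderiv ℝ (Fu f) (t, s) (0, 1) := by
  funext t s; exact (hasDerivAt_s hf t s).deriv

lemma hd_t {f : ℝ → ℝ → ℝ} (hf : Smooth2 f) (t s : ℝ) :
    HasDerivAt (fun τ => f τ s) (pt f t s) t := by
  have h := hasDerivAt_t hf t s
  rw [pt_eq hf]; exact h

lemma hd_s {f : ℝ → ℝ → ℝ} (hf : Smooth2 f) (t s : ℝ) :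
    HasDerivAt (fun σ => f t σ) (ps f t s) s := by
  have h := hasDerivAt_s hf t s
  rw [ps_eq hf]; exact h

lemma smooth2_fderiv_apply {f : ℝ → ℝ → ℝ} (hf : Smooth2 f) (v : ℝ × ℝ) :
    Smooth2 (fun t s => fderiv ℝ (Fu f) (t, s) v) := by
  have h1 : ContDiff ℝ (⊤ : ℕ∞) (fderiv ℝ (Fu f)) := hf.fderiv_right cast_top_add_one_le
  exact (ContinuousLinearMap.apply ℝ ℝ v).contDiff.comp h1

lemma smooth2_pt {f : ℝ → ℝ → ℝ} (hf : Smooth2 f) : Smooth2 (pt f) := by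
  rw [pt_eq hf]; exact smooth2_fderiv_apply hf _

lemma smooth2_ps {f : ℝ → ℝ → ℝ} (hf : Smooth2 f) : Smooth2 (ps f) := by
  rw [ps_eq hf]; exact smooth2_fderiv_apply hf _

lemma fderiv_apply_eq {f : ℝ → ℝ → ℝ} (hf : Smooth2 f) (v w : ℝ × ℝ) (p : ℝ × ℝ) :
    fderiv ℝ (fun q => fderiv ℝ (Fu f) q v) p w = fderiv ℝ (fderiv ℝ (Fu f)) p w v := by
  have h1 : ContDiff ℝ (⊤ : ℕ∞) (fderiv ℝ (Fu f)) := hf.fderiv_right cast_top_add_one_le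
  have h2 : HasFDerivAt (fderiv ℝ (Fu f)) (fderiv ℝ (fderiv ℝ (Fu f)) p) p :=
    (h1.differentiable (by simp) p).hasFDerivAt
  have h3 := ((ContinuousLinearMap.apply ℝ ℝ v).hasFDerivAt).comp p h2
  have h4 : fderiv ℝ (fun q => fderiv ℝ (Fu f) q v) p =
      (ContinuousLinearMap.apply ℝ ℝ v).comp (fderiv ℝ (fderiv ℝ (Fu f)) p) := h3.fderiv
  rw [h4]; rfl

lemma pt_ps_comm {f : ℝ → ℝ → ℝ} (hf : Smooth2 f) : pt (ps f) = ps (pt f) := by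
  have hsymm : ∀ p : ℝ × ℝ, IsSymmSndFDerivAt ℝ (Fu f) p := fun p =>
    (hf.contDiffAt).isSymmSndFDerivAt (by simpa [minSmoothness_of_isRCLikeNormedField] using cast_two_le)
  rw [pt_eq (smooth2_ps hf), ps_eq (smooth2_pt hf), ps_eq hf, pt_eq hf]
  funext t s
  have h1 : Fu (fun t s => fderiv ℝ (Fu f) (t, s) ((0:ℝ), (1:ℝ))) =
      fun q => fderiv ℝ (Fu f) q (0, 1) := rfl
  have h2 : Fu (fun t s => fderiv ℝ (Fu f) (t, s) ((1:ℝ), (0:ℝ))) =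
      fun q => fderiv ℝ (Fu f) q (1, 0) := rfl
  show fderiv ℝ (Fu fun t s => fderiv ℝ (Fu f) (t, s) (0, 1)) (t, s) (1, 0) =
    fderiv ℝ (Fu fun t s => fderiv ℝ (Fu f) (t, s) (1, 0)) (t, s) (0, 1)
  rw [h1, h2, fderiv_apply_eq hf _ _ (t, s), fderiv_apply_eq hf _ _ (t, s)]
  exact hsymm (t, s) _ _

/-- local energy conservation for the nonholonomic planar Cosserat rod. -/
theorem local_energy_conservation_nonholonomic_rod
    (ρ α β K R ℓ : ℝ) (hρ : 0 < ρ) (hα : 0 < α) (hβ : 0 < β) (hK : 0 < K) (hR : 0 < R)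
    (hℓ : 0 < ℓ) (x y θ lam mu : ℝ → ℝ → ℝ)
    (hx : Smooth2 x) (hy : Smooth2 y) (hθ : Smooth2 θ) (hlam : Smooth2 lam) (hmu : Smooth2 mu)
    (heqx : ∀ t : ℝ, ∀ s ∈ Set.Icc (0 : ℝ) ℓ,
      ρ * pt (pt x) t s + K * ps (ps (ps (ps x))) t s = lam t s)
    (heqy : ∀ t : ℝ, ∀ s ∈ Set.Icc (0 : ℝ) ℓ,
      ρ * pt (pt y) t s + K * ps (ps (ps (ps y))) t s = mu t s)
    (heqθ : ∀ t : ℝ, ∀ s ∈ Set.Icc (0 : ℝ) ℓ,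
      α * pt (pt θ) t s - β * ps (ps θ) t s
        = R * (lam t s * ps y t s - mu t s * ps x t s))
    (hc1 : ∀ t : ℝ, ∀ s ∈ Set.Icc (0 : ℝ) ℓ, pt x t s + R * pt θ t s * ps y t s = 0)
    (hc2 : ∀ t : ℝ, ∀ s ∈ Set.Icc (0 : ℝ) ℓ, pt y t s - R * pt θ t s * ps x t s = 0) :
    ∀ t : ℝ, ∀ s ∈ Set.Icc (0 : ℝ) ℓ,
      pt (Edens ρ α β K x y θ) t s
        = ps (fun t' s' =>
            -(K * ps (ps (ps x)) t' s') * pt x t' s' - K * ps (ps (ps y)) t' s' * pt y t' s'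
              + β * ps θ t' s' * pt θ t' s'
              + K * (ps (ps x) t' s' * ps (pt x) t' s' + ps (ps y) t' s' * ps (pt y) t' s')) t s := by
  intro t s hs
  -- time derivatives
  have hx1 := hd_t (smooth2_pt hx) t s
  have hy1 := hd_t (smooth2_pt hy) t s
  have hθ1 := hd_t (smooth2_pt hθ) t s
  have hx2 := hd_t (smooth2_ps (smooth2_ps hx)) t s
  have hy2 := hd_t (smooth2_ps (smooth2_ps hy)) t s
  have hθ2 := hd_t (smooth2_ps hθ) t s
  have hL : HasDerivAt (fun τ => Edens ρ α β K x y θ τ s)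
      (ρ / 2 * (2 * pt x t s * pt (pt x) t s + 2 * pt y t s * pt (pt y) t s)
        + α / 2 * (2 * pt θ t s * pt (pt θ) t s)
        + K / 2 * (2 * ps (ps x) t s * pt (ps (ps x)) t s
            + 2 * ps (ps y) t s * pt (ps (ps y)) t s)
        + β / 2 * (2 * ps θ t s * pt (ps θ) t s)) t := by
    have H := (((HasDerivAt.const_mul (ρ / 2) ((hx1.pow 2).add (hy1.pow 2))).add
        (HasDerivAt.const_mul (α / 2) (hθ1.pow 2))).add
        (HasDerivAt.const_mul (K / 2) ((hx2.pow 2).add (hy2.pow 2)))).add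
        (HasDerivAt.const_mul (β / 2) (hθ2.pow 2))
    refine H.congr_deriv ?_
    ring
  -- arclength derivatives
  have hx3 := hd_s (smooth2_ps (smooth2_ps (smooth2_ps hx))) t s
  have hy3 := hd_s (smooth2_ps (smooth2_ps (smooth2_ps hy))) t s
  have hx4 := hd_s (smooth2_pt hx) t s
  have hy4 := hd_s (smooth2_pt hy) t s
  have hθ4 := hd_s (smooth2_pt hθ) t s
  have hθ3 := hd_s (smooth2_ps hθ) t s
  have hx5 := hd_s (smooth2_ps (smooth2_ps hx)) t s
  have hy5 := hd_s (smooth2_ps (smooth2_ps hy)) t s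
  have hx6 := hd_s (smooth2_ps (smooth2_pt hx)) t s
  have hy6 := hd_s (smooth2_ps (smooth2_pt hy)) t s
  have hR2 : HasDerivAt (fun σ =>
      -(K * ps (ps (ps x)) t σ) * pt x t σ - K * ps (ps (ps y)) t σ * pt y t σ
        + β * ps θ t σ * pt θ t σ
        + K * (ps (ps x) t σ * ps (pt x) t σ + ps (ps y) t σ * ps (pt y) t σ))
      (-(K * ps (ps (ps (ps x))) t s) * pt x t s - K * ps (ps (ps x)) t s * ps (pt x) t s
        - (K * ps (ps (ps (ps y))) t s * pt y t s + K * ps (ps (ps y)) t s * ps (pt y) t s)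
        + (β * ps (ps θ) t s * pt θ t s + β * ps θ t s * ps (pt θ) t s)
        + K * (ps (ps (ps x)) t s * ps (pt x) t s + ps (ps x) t s * ps (ps (pt x)) t s
            + (ps (ps (ps y)) t s * ps (pt y) t s + ps (ps y) t s * ps (ps (pt y)) t s))) s := by
    have H := (((((hx3.const_mul K).neg.mul hx4).sub ((hy3.const_mul K).mul hy4)).add
        ((hθ3.const_mul β).mul hθ4)).add
        (((hx5.mul hx6).add (hy5.mul hy6)).const_mul K))
    refine H.congr_deriv ?_
    simp only [Pi.neg_apply]
    ring
  have eL : pt (Edens ρ α β K x y θ) t s = _ := hL.deriv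
  have eR : ps (fun t' s' =>
      -(K * ps (ps (ps x)) t' s') * pt x t' s' - K * ps (ps (ps y)) t' s' * pt y t' s'
        + β * ps θ t' s' * pt θ t' s'
        + K * (ps (ps x) t' s' * ps (pt x) t' s' + ps (ps y) t' s' * ps (pt y) t' s')) t s
      = _ := hR2.deriv
  rw [eL, eR]
  have cx : pt (ps (ps x)) = ps (ps (pt x)) := by
    rw [pt_ps_comm (smooth2_ps hx), congrArg ps (pt_ps_comm hx)]
  have cy : pt (ps (ps y)) = ps (ps (pt y)) := by
    rw [pt_ps_comm (smooth2_ps hy), congrArg ps (pt_ps_comm hy)]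
  have cθ : pt (ps θ) = ps (pt θ) := pt_ps_comm hθ
  rw [cx, cy, cθ]
  linear_combination (pt x t s) * (heqx t s hs) + (pt y t s) * (heqy t s hs)
    + (pt θ t s) * (heqθ t s hs) + (lam t s) * (hc1 t s hs) + (mu t s) * (hc2 t s hs)
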